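/- If r' preserves the order of r and r is non-constant (r(i) ≠ r(j) for some i, j), then for any strictly positive probability distribution π on [K], the covariance r'^T (diag(π) - π π^T) r is strictly positive. -/

import Mathlib

open Matrix

theorem pos_covariance_of_order_preserving {K : ℕ} (r r' π : Fin K → ℝ)
    (horder : ∀ i j, r i > r j ↔ r' i > r' j)
    (hnonconst : ∃ i j, r i ≠ r j)
    (hπ0 : ∀ i, 0 < π i) (hπ1 : ∑ i, π i = 1) :
    0 < r' ⬝ᵥ ((Matrix.diagonal π - Matrix.vecMulVec π π) *ᵥ r) := by
  set A := ∑ i, π i * r' i * r i with hA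
  set B := ∑ i, π i * r' i with hB
  set C := ∑ i, π i * r i with hC
  have key : r' ⬝ᵥ ((Matrix.diagonal π - Matrix.vecMulVec π π) *ᵥ r) = A - B * C := by
    simp only [dotProduct, mulVec, Matrix.sub_apply, diagonal, vecMulVec, of_apply]
    have h1 : ∀ x, (∑ y, ((if x = y then π x else 0) - π x * π y) * r y)
        = π x * r x - π x * C := by
      intro x
      rw [Finset.sum_congr rfl (fun y _ => sub_mul _ _ _), Finset.sum_sub_distrib]
      congr 1
      · simp [ite_mul, Finset.sum_ite_eq]
      · rw [hC, Finset.mul_sum]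
        exact Finset.sum_congr rfl (fun y _ => by ring)
    simp only [h1]
    rw [Finset.sum_congr rfl (fun x _ => mul_sub (r' x) _ _), Finset.sum_sub_distrib]
    congr 1
    · exact Finset.sum_congr rfl (fun x _ => by ring)
    · rw [hB, Finset.sum_mul]
      exact Finset.sum_congr rfl (fun x _ => by ring)
  rw [key]
  have hrr' : ∀ i j, r i = r j → r' i = r' j := by
    intro i j h
    by_contra hne
    rcases lt_or_gt_of_ne hne with hh | hh
    · exact absurd ((horder j i).mpr hh) (by simp [h])
    · exact absurd ((horder i j).mpr hh) (by simp [h])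
  have hnn : ∀ i j, 0 ≤ π i * π j * (r' i - r' j) * (r i - r j) := by
    intro i j
    rcases lt_trichotomy (r i) (r j) with h | h | h
    · have h2 : r' i < r' j := (horder j i).mp h
      nlinarith [mul_pos (hπ0 i) (hπ0 j), mul_pos (sub_pos.mpr h) (sub_pos.mpr h2)]
    · simp [h, hrr' i j h]
    · have h2 : r' i > r' j := (horder i j).mp h
      nlinarith [mul_pos (hπ0 i) (hπ0 j), mul_pos (sub_pos.mpr h) (sub_pos.mpr h2)]
  have hdouble : ∑ i, ∑ j, π i * π j * (r' i - r' j) * (r i - r j) = 2 * (A - B * C) := by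
    have inner : ∀ i, ∑ j, π i * π j * (r' i - r' j) * (r i - r j)
        = π i * r' i * r i + π i * A - π i * r' i * C - π i * r i * B := by
      intro i
      have h2 : ∀ j, π i * π j * (r' i - r' j) * (r i - r j)
          = π i * r' i * r i * π j + π i * (π j * r' j * r j)
            - π i * r' i * (π j * r j) - π i * r i * (π j * r' j) := by
        intro j; ring
      rw [Finset.sum_congr rfl (fun j _ => h2 j)]
      rw [Finset.sum_sub_distrib, Finset.sum_sub_distrib, Finset.sum_add_distrib,
        ← Finset.mul_sum, ← Finset.mul_sum, ← Finset.mul_sum, ← Finset.mul_sum,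
        hπ1, ← hA, ← hB, ← hC]
      ring
    rw [Finset.sum_congr rfl (fun i _ => inner i)]
    rw [Finset.sum_sub_distrib, Finset.sum_sub_distrib, Finset.sum_add_distrib,
      ← Finset.sum_mul, ← Finset.sum_mul, ← Finset.sum_mul, hπ1, ← hA, ← hB, ← hC]
    ring
  obtain ⟨i0, j0, hij⟩ := hnonconst
  have hpos : 0 < ∑ i, ∑ j, π i * π j * (r' i - r' j) * (r i - r j) := by
    have hterm : 0 < π i0 * π j0 * (r' i0 - r' j0) * (r i0 - r j0) := by
      rcases lt_or_gt_of_ne hij with h | h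
      · have h2 : r' i0 < r' j0 := (horder j0 i0).mp h
        nlinarith [mul_pos (hπ0 i0) (hπ0 j0), mul_pos (sub_pos.mpr h) (sub_pos.mpr h2)]
      · have h2 : r' i0 > r' j0 := (horder i0 j0).mp h
        nlinarith [mul_pos (hπ0 i0) (hπ0 j0), mul_pos (sub_pos.mpr h) (sub_pos.mpr h2)]
    have hinner : 0 < ∑ j, π i0 * π j * (r' i0 - r' j) * (r i0 - r j) :=
      Finset.sum_pos' (fun j _ => hnn i0 j) ⟨j0, Finset.mem_univ j0, hterm⟩
    exact Finset.sum_pos' (fun i _ => Finset.sum_nonneg (fun j _ => hnn i j))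
      ⟨i0, Finset.mem_univ i0, hinner⟩
  linarith
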